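/- Every element of Ǧ(A) is invertible under composition: for g ∈ A((x)) with g = Σ g_k x^{k+1}, g_0 a unit, and g_k nilpotent for k < 0, there exists h ∈ Ǧ(A) with g∘h = h∘g = x. Hence Ǧ(A) is a group under composition. -/

import Mathlib

namespace Tate

/-- The set `Ǧ(A)` of invertible nil-Laurent series: Laurent series
`g = Σ_k g_k x^(k+1)` with `g_0` (the coefficient of `x^1`) a unit of `A` and `g_k`
(the coefficient of `x^(k+1)`, `k < 0`) nilpotent for all `k < 0`. -/
def Gcheck (A : Type*) [CommRing A] : Set (LaurentSeries A) :=
  {g | IsUnit (g.coeff 1) ∧ ∀ n : ℤ, n ≤ 0 → IsNilpotent (g.coeff n)}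

/-- Integer powers of a Laurent series, using the inverse in the Laurent series ring
(`Ring.inverse`, which is the genuine inverse for a unit) for negative exponents. -/
noncomputable def lzpow {A : Type*} [CommRing A] (g : LaurentSeries A) (k : ℤ) :
    LaurentSeries A :=
  if 0 ≤ k then g ^ k.toNat else (Ring.inverse g) ^ (-k).toNat

/-- The coefficient of `x^d` in the formal composite `f ∘ g = Σ_m f_m g^m`
(writing `f = Σ_m f_m x^m`), computed coefficientwise; for `g ∈ Ǧ(A)` only finitely
many terms contribute to each coefficient, by nilpotence. -/
noncomputable def compCoeff {A : Type*} [CommRing A] (f g : LaurentSeries A) (d : ℤ) : A :=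
  ∑ᶠ k : ℤ, f.coeff k * (lzpow g k).coeff d

section Aux

variable {A : Type*} [CommRing A]

open HahnSeries Finset


variable {A : Type*} [CommRing A]

open HahnSeries Finset

/-- Laurent series are bounded below; sets bounded below in ℤ are PWO. -/
lemma bddBelow_isPWO {S : Set ℤ} (h : BddBelow S) : S.IsPWO :=
  (Set.isPWO_iff_isWF).mpr h.wellFoundedOn_lt

/-- Build a Laurent series from a coefficient function vanishing below `b`. -/
noncomputable def ofc (c : ℤ → A) (b : ℤ) (hb : ∀ d, d < b → c d = 0) : LaurentSeries A :=
  ⟨c, bddBelow_isPWO ⟨b, fun d hd => by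
    by_contra hlt
    exact hd (hb d (lt_of_not_ge hlt))⟩⟩

@[simp] lemma ofc_coeff (c : ℤ → A) (b : ℤ) (hb : ∀ d, d < b → c d = 0) (d : ℤ) :
    (ofc c b hb).coeff d = c d := rfl

/-- Every Laurent series has a lower bound for its support, which may be taken `≤ 0`. -/
lemma lb (z : LaurentSeries A) : ∃ b : ℤ, b ≤ 0 ∧ ∀ d, d < b → z.coeff d = 0 := by
  by_cases hS : z.support.Nonempty
  · refine ⟨min (z.isWF_support.min hS) 0, min_le_right _ _, fun d hd => ?_⟩
    by_contra hne
    have hmem : d ∈ z.support := hne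
    exact absurd (Set.IsWF.min_le _ hS hmem)
      (not_le.mpr (lt_of_lt_of_le hd (min_le_left _ _)))
  · exact ⟨0, le_refl _, fun d _ => by
      by_contra hne
      exact hS ⟨d, hne⟩⟩

/-- `OG c z` : the coefficients of `z` vanish below `c` ("order at least `c`"). -/
def OG (c : ℤ) (z : LaurentSeries A) : Prop := ∀ d, d < c → z.coeff d = 0

lemma OG.mono {c c' : ℤ} {z : LaurentSeries A} (h : OG c z) (hle : c' ≤ c) : OG c' z :=
  fun d hd => h d (lt_of_lt_of_le hd hle)

lemma OG_zero (c : ℤ) : OG c (0 : LaurentSeries A) := fun _ _ => rfl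

lemma OG_one : OG 0 (1 : LaurentSeries A) := by
  intro d hd
  rw [HahnSeries.coeff_one, if_neg (by omega)]

lemma OG_single (a : ℤ) (r : A) : OG a (HahnSeries.single a r) := by
  intro d hd
  rw [HahnSeries.coeff_single, if_neg (by omega)]

lemma OG.add {a : ℤ} {z w : LaurentSeries A} (hz : OG a z) (hw : OG a w) : OG a (z + w) := by
  intro d hd
  rw [HahnSeries.coeff_add, hz d hd, hw d hd, add_zero]

lemma OG.neg {a : ℤ} {z : LaurentSeries A} (hz : OG a z) : OG a (-z) := by
  intro d hd
  rw [HahnSeries.coeff_neg, hz d hd, neg_zero]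

lemma OG.smul {a : ℤ} {r : A} {z : LaurentSeries A} (hz : OG a z) : OG a (r • z) := by
  intro d hd
  rw [HahnSeries.coeff_smul, hz d hd, smul_zero]

lemma OG.mul {a b : ℤ} {z w : LaurentSeries A} (hz : OG a z) (hw : OG b w) :
    OG (a + b) (z * w) := by
  intro d hd
  rw [HahnSeries.coeff_mul]
  refine Finset.sum_eq_zero fun ij hij => ?_
  rw [Finset.mem_addAntidiagonal] at hij
  obtain ⟨h1, h2, h3⟩ := hij
  by_cases hlt : ij.1 < a
  · exact absurd (hz ij.1 hlt) h1
  · have : ij.2 < b := by omega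
    exact absurd (hw ij.2 this) h2

lemma OG.pow {a : ℤ} {z : LaurentSeries A} (hz : OG a z) (n : ℕ) : OG (n * a) (z ^ n) := by
  induction n with
  | zero => simpa using OG_one.mono (le_refl 0)
  | succ n ih =>
      have := ih.mul hz
      rw [← pow_succ] at this
      exact this.mono (by push_cast; ring_nf; omega)

lemma OG_natCast (c : ℕ) : OG 0 ((c : LaurentSeries A)) := by
  induction c with
  | zero => simpa using OG_zero 0
  | succ n ih =>
      push_cast
      exact ih.add OG_one

/-- Two finite sums agree if the summand vanishes off the intersection. -/
lemma sumvan {α M : Type*} [AddCommMonoid M] [DecidableEq α] {F : α → M} {s t : Finset α}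
    (h1 : ∀ i ∈ s, i ∉ t → F i = 0) (h2 : ∀ i ∈ t, i ∉ s → F i = 0) :
    ∑ i ∈ s, F i = ∑ i ∈ t, F i := by
  rw [Finset.sum_subset (Finset.subset_union_left (s₂ := t))
      (fun x hx hxs => h2 x (by rcases Finset.mem_union.mp hx with h | h; exact absurd h hxs; exact h) hxs),
    Finset.sum_subset (Finset.subset_union_right (s₁ := s))
      (fun x hx hxt => h1 x (by rcases Finset.mem_union.mp hx with h | h; exact h; exact absurd h hxt) hxt)]

/-- Generic finite-interval formula for a product coefficient. -/
lemma mulc (z w : LaurentSeries A) (d lo hi : ℤ)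
    (h1 : ∀ i, i < lo → z.coeff i = 0) (h2 : ∀ i, hi < i → w.coeff (d - i) = 0) :
    (z * w).coeff d = ∑ i ∈ Finset.Icc lo hi, z.coeff i * w.coeff (d - i) := by
  classical
  rw [HahnSeries.coeff_mul]
  have hmap : ∑ i ∈ Finset.Icc lo hi, z.coeff i * w.coeff (d - i)
      = ∑ ij ∈ (Finset.Icc lo hi).map
          ⟨fun i => (i, d - i), Function.LeftInverse.injective (g := Prod.fst) fun _ => rfl⟩,
          z.coeff ij.1 * w.coeff ij.2 := by
    rw [Finset.sum_map]; rfl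
  rw [hmap]
  refine sumvan ?_ ?_
  · intro ij hij hnij
    rw [Finset.mem_addAntidiagonal] at hij
    obtain ⟨hz, hw, hsum⟩ := hij
    exfalso
    refine hnij ?_
    rw [Finset.mem_map]
    refine ⟨ij.1, ?_, ?_⟩
    · rw [Finset.mem_Icc]
      constructor
      · by_contra hlt
        exact hz (h1 _ (by omega))
      · by_contra hlt
        have he : ij.2 = d - ij.1 := by omega
        exact hw (he ▸ h2 ij.1 (by omega))
    · have he : ij.2 = d - ij.1 := by omega
      simp [Function.Embedding.coeFn_mk, ← he]
  · intro ij hij hnij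
    rw [Finset.mem_map] at hij
    obtain ⟨i, hi, rfl⟩ := hij
    simp only [Function.Embedding.coeFn_mk]
    by_contra hne
    have hz : z.coeff i ≠ 0 := fun h => hne (by rw [h, zero_mul])
    have hw : w.coeff (d - i) ≠ 0 := fun h => hne (by rw [h, mul_zero])
    refine hnij (Finset.mem_addAntidiagonal.mpr ⟨hz, hw, ?_⟩)
    show i + (d - i) = d
    ring

/-! ### Coefficientwise ideal membership -/

/-- `CIn J z` : all coefficients of `z` lie in the ideal `J`. -/
def CIn (J : Ideal A) (z : LaurentSeries A) : Prop := ∀ d, z.coeff d ∈ J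

lemma CIn.mono {J K : Ideal A} {z : LaurentSeries A} (h : CIn J z) (hJK : J ≤ K) : CIn K z :=
  fun d => hJK (h d)

lemma CIn_zero (J : Ideal A) : CIn J (0 : LaurentSeries A) := fun _ => J.zero_mem

lemma CIn_top (z : LaurentSeries A) : CIn ⊤ z := fun _ => trivial

lemma CIn.add {J : Ideal A} {z w : LaurentSeries A} (hz : CIn J z) (hw : CIn J w) :
    CIn J (z + w) := fun d => by
  rw [HahnSeries.coeff_add]; exact J.add_mem (hz d) (hw d)

lemma CIn.neg {J : Ideal A} {z : LaurentSeries A} (hz : CIn J z) : CIn J (-z) := fun d => by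
  rw [HahnSeries.coeff_neg]; exact J.neg_mem (hz d)

lemma CIn.sub {J : Ideal A} {z w : LaurentSeries A} (hz : CIn J z) (hw : CIn J w) :
    CIn J (z - w) := by
  rw [sub_eq_add_neg]; exact hz.add hw.neg

lemma CIn.mul_left {J : Ideal A} (z : LaurentSeries A) {w : LaurentSeries A} (hw : CIn J w) :
    CIn J (z * w) := fun d => by
  rw [HahnSeries.coeff_mul]
  exact Ideal.sum_mem J fun ij _ => J.mul_mem_left _ (hw ij.2)

lemma CIn.mul_right {J : Ideal A} {z : LaurentSeries A} (hz : CIn J z) (w : LaurentSeries A) :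
    CIn J (z * w) := fun d => by
  rw [HahnSeries.coeff_mul]
  exact Ideal.sum_mem J fun ij _ => J.mul_mem_right _ (hz ij.1)

lemma CIn.mul {J K : Ideal A} {z w : LaurentSeries A} (hz : CIn J z) (hw : CIn K w) :
    CIn (J * K) (z * w) := fun d => by
  rw [HahnSeries.coeff_mul]
  exact Ideal.sum_mem _ fun ij _ => Ideal.mul_mem_mul (hz ij.1) (hw ij.2)

lemma CIn.pow {J : Ideal A} {z : LaurentSeries A} (hz : CIn J z) (n : ℕ) :
    CIn (J ^ n) (z ^ n) := by
  induction n with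
  | zero => simpa using CIn_top 1
  | succ n ih =>
      rw [pow_succ, pow_succ]
      exact ih.mul hz

lemma CIn.eq_zero {z : LaurentSeries A} (hz : CIn (⊥ : Ideal A) z) : z = 0 := by
  ext d
  exact (Ideal.mem_bot).mp (hz d)

lemma CIn.smul {J : Ideal A} {r : A} {z : LaurentSeries A} (hz : CIn J z) : CIn J (r • z) :=
  fun d => by rw [HahnSeries.coeff_smul]; exact J.mul_mem_left _ (hz d)

lemma CIn.pow_eq_zero {I : Ideal A} {M : ℕ} (hIM : I ^ M = ⊥) {z : LaurentSeries A}
    (hz : CIn I z) : z ^ M = 0 :=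
  CIn.eq_zero (by simpa [hIM] using hz.pow M)

/-! ### Units -/

/-- Inverse of `1 - y` for `y` of positive order. -/
lemma geom_unit {y : LaurentSeries A} (hy : OG 1 y) :
    ∃ z, (1 - y) * z = 1 ∧ OG 0 z := by
  classical
  have hyp : ∀ t : ℕ, OG t (y ^ t) := fun t => by simpa using hy.pow t
  have hzero : ∀ d : ℤ, d < 0 → (∑ t ∈ Finset.range (d.toNat + 1), (y ^ t).coeff d) = 0 :=
    fun d hd => Finset.sum_eq_zero fun t _ => hyp t d (by omega)
  refine ⟨ofc (fun d => ∑ t ∈ Finset.range (d.toNat + 1), (y ^ t).coeff d) 0 hzero, ?_,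
    fun d hd => hzero d hd⟩
  ext d
  set z := ofc (fun d => ∑ t ∈ Finset.range (d.toNat + 1), (y ^ t).coeff d) 0 hzero with hzdef
  set n := d.toNat + 1 with hn
  have hdn : d < (n : ℤ) := by omega
  set S : LaurentSeries A := ∑ t ∈ Finset.range n, y ^ t with hS
  have hzS : ∀ e : ℤ, e ≤ d → z.coeff e = S.coeff e := by
    intro e he
    have hSc : S.coeff e = ∑ t ∈ Finset.range n, (y ^ t).coeff e := by
      rw [hS]
      induction (Finset.range n) using Finset.induction_on with
      | empty => simp
      | @insert a s ha ih => rw [Finset.sum_insert ha, Finset.sum_insert ha,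
          HahnSeries.coeff_add, ih]
    rw [hSc, hzdef, ofc_coeff]
    refine Finset.sum_subset ?_ ?_
    · intro t ht
      rw [Finset.mem_range] at ht ⊢
      omega
    · intro t _ ht
      rw [Finset.mem_range] at ht
      exact hyp t e (by omega)
  have hgeom : (1 - y) * S = 1 - y ^ n := by
    have := geom_sum_mul (x := y) (n := n)
    calc (1 - y) * S = -((∑ i ∈ Finset.range n, y ^ i) * (y - 1)) := by rw [hS]; ring
    _ = -(y ^ n - 1) := by rw [this]
    _ = 1 - y ^ n := by ring
  have key : ((1 - y) * z).coeff d = ((1 - y) * S).coeff d := by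
    have h1y : ∀ i : ℤ, i < 0 → (1 - y).coeff i = 0 := by
      intro i hi
      rw [HahnSeries.coeff_sub, OG_one i hi, hy i (by omega), sub_zero]
    rw [mulc (1 - y) z d 0 d h1y (fun i hi => hzdef ▸ hzero _ (by omega)),
        mulc (1 - y) S d 0 d h1y (fun i hi => ?_)]
    · exact Finset.sum_congr rfl fun i hi => by
        rw [Finset.mem_Icc] at hi
        rw [hzS (d - i) (by omega)]
    · have hOS : OG 0 S := by
        rw [hS]
        induction (Finset.range n) using Finset.induction_on with
        | empty => simpa using OG_zero 0
        | @insert a s ha ih =>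
            rw [Finset.sum_insert ha]
            exact ((hyp a).mono (by positivity)).add ih
      exact hOS _ (by omega)
  rw [key, hgeom, HahnSeries.coeff_sub, (hyp n) d hdn, sub_zero]

/-- A series with invertible lowest coefficient at `c` and order `≥ c` is a unit. -/
lemma unit_pure {h : LaurentSeries A} {c : ℤ} (hc : OG c h) (hu : IsUnit (h.coeff c)) :
    IsUnit h ∧ OG (-c) (Ring.inverse h) := by
  obtain ⟨u', hu'⟩ := hu.exists_right_inv
  have hsm : ∀ e : ℤ, (HahnSeries.single (-c) u' * h).coeff e = u' * h.coeff (e + c) := by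
    intro e
    have := HahnSeries.coeff_single_mul_add (r := u') (x := h) (a := e + c) (b := -c)
    simpa [add_assoc] using this
  have hy : OG 1 (1 - HahnSeries.single (-c) u' * h) := by
    intro e he
    rw [HahnSeries.coeff_sub, hsm e]
    rcases lt_or_ge e 0 with h0 | h0
    · rw [OG_one e h0, hc (e + c) (by omega), mul_zero, sub_zero]
    · have he0 : e = 0 := by omega
      subst he0
      rw [HahnSeries.coeff_one, if_pos rfl, zero_add, mul_comm, hu', sub_self]
  obtain ⟨z₀, hz₀, hOz₀⟩ := geom_unit hy
  have hkey : h * (z₀ * HahnSeries.single (-c) u') = 1 := by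
    have : (1 : LaurentSeries A) - (1 - HahnSeries.single (-c) u' * h) =
        HahnSeries.single (-c) u' * h := by ring
    calc h * (z₀ * HahnSeries.single (-c) u')
        = (HahnSeries.single (-c) u' * h) * z₀ := by ring
      _ = 1 := by rw [← this, hz₀]
  have hunit : IsUnit h := IsUnit.of_mul_eq_one _ hkey
  refine ⟨hunit, ?_⟩
  have hinv : Ring.inverse h = z₀ * HahnSeries.single (-c) u' := by
    calc Ring.inverse h = Ring.inverse h * (h * (z₀ * HahnSeries.single (-c) u')) := by
          rw [hkey, mul_one]
      _ = (Ring.inverse h * h) * (z₀ * HahnSeries.single (-c) u') := by ring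
      _ = z₀ * HahnSeries.single (-c) u' := by
          rw [Ring.inverse_mul_cancel _ hunit, one_mul]
  rw [hinv]
  have := hOz₀.mul (OG_single (-c) u')
  simpa using this

/-! ### lzpow basics -/

lemma lzpow_nonneg {h : LaurentSeries A} {k : ℤ} (hk : 0 ≤ k) : lzpow h k = h ^ k.toNat :=
  if_pos hk

lemma lzpow_neg' {h : LaurentSeries A} {k : ℤ} (hk : k < 0) :
    lzpow h k = (Ring.inverse h) ^ (-k).toNat := if_neg (by omega)

lemma lzpow_zero (h : LaurentSeries A) : lzpow h 0 = 1 := by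
  rw [lzpow_nonneg le_rfl]; rfl

lemma lzpow_one (h : LaurentSeries A) : lzpow h 1 = h := by
  rw [lzpow_nonneg one_pos.le]
  norm_num

lemma lzpow_units {h : LaurentSeries A} (H : IsUnit h) (k : ℤ) :
    lzpow h k = ((H.unit ^ k : (LaurentSeries A)ˣ) : LaurentSeries A) := by
  rcases le_or_gt 0 k with hk | hk
  · rw [lzpow_nonneg hk]
    obtain ⟨n, rfl⟩ := Int.eq_ofNat_of_zero_le hk
    rw [zpow_natCast, Int.toNat_natCast]
    push_cast
    rw [H.unit_spec]
  · rw [lzpow_neg' hk]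
    obtain ⟨n, hn⟩ : ∃ n : ℕ, k = -(n : ℤ) := ⟨(-k).toNat, by omega⟩
    subst hn
    have hinv : Ring.inverse h = ((H.unit⁻¹ : (LaurentSeries A)ˣ) : LaurentSeries A) := by
      have h2 := Ring.inverse_unit H.unit
      rwa [H.unit_spec] at h2
    calc (Ring.inverse h) ^ (-(-(n:ℤ))).toNat
        = ((H.unit⁻¹ : (LaurentSeries A)ˣ) : LaurentSeries A) ^ n := by
          have ht : (-(-(n:ℤ))).toNat = n := by omega
          rw [ht]
          exact congrArg (fun z => z ^ n) hinv
      _ = ((H.unit⁻¹ ^ n : (LaurentSeries A)ˣ) : LaurentSeries A) := by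
          rw [Units.val_pow_eq_pow_val]
      _ = ((H.unit ^ (-(n:ℤ)) : (LaurentSeries A)ˣ) : LaurentSeries A) := by
          congr 1
          rw [zpow_neg, zpow_natCast, inv_pow]

lemma lzpow_add {h : LaurentSeries A} (H : IsUnit h) (a b : ℤ) :
    lzpow h (a + b) = lzpow h a * lzpow h b := by
  rw [lzpow_units H, lzpow_units H, lzpow_units H, zpow_add]
  push_cast
  rfl

lemma lzpow_X (k : ℤ) : lzpow (HahnSeries.single 1 1 : LaurentSeries A) k
    = HahnSeries.single k 1 := by
  have hXpow : ∀ n : ℕ, (HahnSeries.single (1:ℤ) (1:A)) ^ n = HahnSeries.single (n : ℤ) 1 := by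
    intro n
    rw [HahnSeries.single_pow]
    norm_num
  rcases le_or_gt 0 k with hk | hk
  · rw [lzpow_nonneg hk, hXpow, Int.toNat_of_nonneg hk]
  · rw [lzpow_neg' hk]
    have hXunit : (HahnSeries.single (1:ℤ) (1:A)) * HahnSeries.single (-1) 1 = 1 := by
      rw [HahnSeries.single_mul_single]
      norm_num
    have hinv : Ring.inverse (HahnSeries.single (1:ℤ) (1:A)) = HahnSeries.single (-1) 1 := by
      have hu : IsUnit (HahnSeries.single (1:ℤ) (1:A)) := IsUnit.of_mul_eq_one _ hXunit
      calc Ring.inverse (HahnSeries.single (1:ℤ) (1:A))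
          = Ring.inverse (HahnSeries.single (1:ℤ) (1:A)) *
            ((HahnSeries.single (1:ℤ) (1:A)) * HahnSeries.single (-1) 1) := by
            rw [hXunit, mul_one]
        _ = HahnSeries.single (-1) 1 := by
            rw [← mul_assoc, Ring.inverse_mul_cancel _ hu, one_mul]
    have hsm : ((-k).toNat) • (-1:ℤ) = k := by
      rw [nsmul_eq_mul]
      push_cast
      omega
    rw [hinv, HahnSeries.single_pow, one_pow, hsm]

/-! ### Good composition data -/

/-- `Good h C D` records uniform support bounds on all integer powers of `h`. -/
def Good (h : LaurentSeries A) (C D : ℤ) : Prop :=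
  ∀ k d : ℤ, (lzpow h k).coeff d ≠ 0 → (0 ≤ k → k ≤ d + C) ∧ (k < 0 → k * D ≤ d)

lemma compCoeff_eq_sum {h : LaurentSeries A} {C D : ℤ} (hG : Good h C D)
    {f : LaurentSeries A} {bf : ℤ} (hbf : ∀ k, k < bf → f.coeff k = 0) (d : ℤ) :
    compCoeff f h d =
      ∑ k ∈ Finset.Icc bf (max (d + C) 0), f.coeff k * (lzpow h k).coeff d := by
  refine finsum_eq_finset_sum_of_support_subset _ ?_
  intro k hk
  simp only [Function.mem_support] at hk
  have hf : f.coeff k ≠ 0 := fun h0 => hk (by rw [h0, zero_mul])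
  have hl : (lzpow h k).coeff d ≠ 0 := fun h0 => hk (by rw [h0, mul_zero])
  have := hG k d hl
  simp only [Finset.coe_Icc, Set.mem_Icc]
  constructor
  · by_contra hc; exact hf (hbf k (by omega))
  · rcases le_or_gt 0 k with h0 | h0
    · exact le_trans (this.1 h0) (le_max_left _ _)
    · omega

lemma compCoeff_vanish {h : LaurentSeries A} {C D : ℤ} (hG : Good h C D) (hD : 0 ≤ D)
    {f : LaurentSeries A} {bf : ℤ} (hbf : ∀ k, k < bf → f.coeff k = 0) (hbf0 : bf ≤ 0)
    {d : ℤ} (hd1 : d < -C) (hd2 : d < bf * D) : compCoeff f h d = 0 := by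
  rw [compCoeff_eq_sum hG hbf d]
  refine Finset.sum_eq_zero fun k hk => ?_
  rw [Finset.mem_Icc] at hk
  by_contra hne
  have hl : (lzpow h k).coeff d ≠ 0 := fun h0 => hne (by rw [h0, mul_zero])
  have hGk := hG k d hl
  rcases le_or_gt 0 k with h0 | h0
  · have := hGk.1 h0; omega
  · have h1 := hGk.2 h0
    have h2 : bf * D ≤ k * D := mul_le_mul_of_nonneg_right hk.1 hD
    omega

def CompOK (f h : LaurentSeries A) : Prop := ∃ b : ℤ, ∀ d, d < b → compCoeff f h d = 0

open Classical in
/-- Composition as a Laurent series (defined when the coefficients are bounded below). -/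
noncomputable def comp (f h : LaurentSeries A) : LaurentSeries A :=
  if H : CompOK f h then ofc (compCoeff f h) H.choose H.choose_spec else 0

lemma comp_coeff {f h : LaurentSeries A} (H : CompOK f h) (d : ℤ) :
    (comp f h).coeff d = compCoeff f h d := by
  rw [comp]
  rw [dif_pos H]
  rfl

lemma compOK_of_good {h : LaurentSeries A} {C D : ℤ} (hG : Good h C D) (hD : 0 ≤ D)
    (f : LaurentSeries A) : CompOK f h := by
  obtain ⟨bf, hbf0, hbf⟩ := lb f
  exact ⟨min (-C) (bf * D), fun d hd =>
    compCoeff_vanish hG hD hbf hbf0 (by omega) (by omega)⟩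

/-- lower bound lemma for `lzpow` from `Good`. -/
lemma lzpow_OG {h : LaurentSeries A} {C D : ℤ} (hG : Good h C D) (k : ℤ) :
    OG (if 0 ≤ k then k - C else k * D) (lzpow h k) := by
  intro d hd
  by_contra hne
  have := hG k d hne
  rcases le_or_gt 0 k with h0 | h0
  · rw [if_pos h0] at hd; have := this.1 h0; omega
  · rw [if_neg (by omega)] at hd; have := this.2 h0; omega

/-- Telescoping: powers of units that agree mod a coefficient ideal. -/
lemma lzpow_sub_cin {U V : LaurentSeries A} (hU : IsUnit U) (hV : IsUnit V)
    {J : Ideal A} (hUV : CIn J (U - V)) (k : ℤ) : CIn J (lzpow U k - lzpow V k) := by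
  have hnat : ∀ (a b : LaurentSeries A), CIn J (a - b) → ∀ n : ℕ, CIn J (a ^ n - b ^ n) := by
    intro a b hab n
    induction n with
    | zero => simpa using CIn_zero J
    | succ n ih =>
        have : a ^ (n + 1) - b ^ (n + 1) = a ^ n * (a - b) + (a ^ n - b ^ n) * b := by ring
        rw [this]
        exact ((CIn.mul_left _ hab).add (ih.mul_right _))
  have hinv : CIn J (Ring.inverse U - Ring.inverse V) := by
    have hident : Ring.inverse U - Ring.inverse V
        = Ring.inverse U * Ring.inverse V * (V - U) := by
      have h1 : Ring.inverse U * U = 1 := Ring.inverse_mul_cancel _ hU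
      have h2 : Ring.inverse V * V = 1 := Ring.inverse_mul_cancel _ hV
      calc Ring.inverse U - Ring.inverse V
          = Ring.inverse U * (Ring.inverse V * V) - (Ring.inverse U * U) * Ring.inverse V := by
            rw [h1, h2]; ring
        _ = Ring.inverse U * Ring.inverse V * (V - U) := by ring
    rw [hident]
    have : CIn J (V - U) := by
      have := hUV.neg
      simpa using this
    exact CIn.mul_left _ this
  rcases le_or_gt 0 k with h0 | h0
  · rw [lzpow_nonneg h0, lzpow_nonneg h0]
    exact hnat U V hUV _
  · rw [lzpow_neg' h0, lzpow_neg' h0]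
    exact hnat _ _ hinv _

lemma coeff_sum {ι : Type*} {s : Finset ι} {F : ι → LaurentSeries A} (d : ℤ) :
    (∑ i ∈ s, F i).coeff d = ∑ i ∈ s, (F i).coeff d := by
  classical
  induction s using Finset.induction_on with
  | empty => simp
  | @insert a s ha ih =>
      rw [Finset.sum_insert ha, Finset.sum_insert ha, HahnSeries.coeff_add, ih]

lemma OG_sum {c : ℤ} {ι : Type*} {s : Finset ι} {F : ι → LaurentSeries A}
    (h : ∀ i ∈ s, OG c (F i)) : OG c (∑ i ∈ s, F i) := by
  intro d hd
  rw [coeff_sum]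
  exact Finset.sum_eq_zero fun i hi => h i hi d hd

lemma CIn_sum {J : Ideal A} {ι : Type*} {s : Finset ι} {F : ι → LaurentSeries A}
    (h : ∀ i ∈ s, CIn J (F i)) : CIn J (∑ i ∈ s, F i) := by
  intro d
  rw [coeff_sum]
  exact Ideal.sum_mem _ fun i hi => h i hi d

/-- The main structural lemma: a series that is `(order ≥ 1 series with unit coeff at 1)`
plus a nilpotent tail is a unit with good uniform power bounds. -/
lemma good_of_decomp {h P N : LaurentSeries A} {e : ℤ} {M : ℕ}
    (hdec : h = P + N) (hP1 : OG 1 P) (hPu : IsUnit (P.coeff 1))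
    (he : e ≤ 0) (hNe : OG e N) (hNM : N ^ M = 0) (hM : 1 ≤ M) :
    IsUnit h ∧ Good h (((M:ℤ) - 1) * (1 - e)) (1 + ((M:ℤ) - 1) * (1 - e)) := by
  set C : ℤ := ((M:ℤ) - 1) * (1 - e) with hCdef
  set D : ℤ := 1 + C with hDdef
  have hM' : (1:ℤ) ≤ (M:ℤ) := by exact_mod_cast hM
  have hC : 0 ≤ C := by rw [hCdef]; nlinarith
  obtain ⟨hPunit, hiP⟩ := unit_pure hP1 hPu
  have hNnil : IsNilpotent N := ⟨M, hNM⟩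
  have hU : IsUnit h := by
    rw [hdec, add_comm P N]
    exact hNnil.isUnit_add_right_of_commute hPunit (Commute.all _ _)
  -- positive powers
  have claim1 : ∀ k : ℕ, OG ((k:ℤ) - C) (h ^ k) := by
    intro k
    rw [hdec, add_pow]
    refine OG_sum fun j hj => ?_
    rw [Finset.mem_range] at hj
    rcases le_or_gt M (k - j) with hMk | hMk
    · have : N ^ (k - j) = 0 := by
        have : N ^ (k - j) = N ^ M * N ^ (k - j - M) := by
          rw [← _root_.pow_add]; congr 1; omega
        rw [this, hNM, zero_mul]
      rw [this, mul_zero, zero_mul]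
      exact OG_zero _
    · have h1 : OG ((j:ℤ)) (P ^ j) := by simpa using hP1.pow j
      have h2 : OG (((k-j:ℕ):ℤ) * e) (N ^ (k - j)) := hNe.pow (k - j)
      have h3 : OG 0 ((k.choose j : LaurentSeries A)) := OG_natCast _
      have := (h1.mul h2).mul h3
      refine this.mono ?_
      have hkj : ((k:ℤ) - j) ≤ (M:ℤ) - 1 := by push_cast; omega
      have hcast : ((k - j : ℕ) : ℤ) = (k:ℤ) - (j:ℤ) := by push_cast; omega
      rw [hcast]
      nlinarith [hkj, he]
  -- the inverse
  set iP : LaurentSeries A := Ring.inverse P with hiPdef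
  set ν : LaurentSeries A := N * iP with hν
  have hνM : ν ^ M = 0 := by
    rw [hν, mul_pow, hNM, zero_mul]
  set S : LaurentSeries A := ∑ t ∈ Finset.range M, (-ν) ^ t with hSdef
  have hinvh : h * (iP * S) = 1 := by
    have hPiP : P * iP = 1 := by
      rw [hiPdef]; exact Ring.mul_inverse_cancel _ hPunit
    have hstep : h * (iP * S) = (1 + ν) * S := by
      rw [hdec, hν]
      calc (P + N) * (iP * S) = (P * iP) * S + (N * iP) * S := by ring
        _ = (1 + N * iP) * S := by rw [hPiP]; ring
    rw [hstep, hSdef, Finset.mul_sum]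
    have hterm : ∀ t : ℕ, (1 + ν) * (-ν) ^ t = (-ν) ^ t - (-ν) ^ (t + 1) := by
      intro t
      rw [pow_succ]
      ring
    rw [Finset.sum_congr rfl (fun t _ => hterm t), Finset.sum_range_sub']
    have hmν : (-ν) ^ M = 0 := by
      have hh : (-ν) = (-1) * ν := by ring
      rw [hh, mul_pow, hνM, mul_zero]
    rw [hmν, pow_zero, sub_zero]
  have hinv_eq : Ring.inverse h = iP * S := by
    calc Ring.inverse h = Ring.inverse h * (h * (iP * S)) := by rw [hinvh, mul_one]
      _ = (Ring.inverse h * h) * (iP * S) := by ring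
      _ = iP * S := by rw [Ring.inverse_mul_cancel _ hU, one_mul]
  have claim2 : OG (-D) (Ring.inverse h) := by
    rw [hinv_eq]
    have hOS : OG (((M:ℤ) - 1) * (e - 1)) S := by
      rw [hSdef]
      refine OG_sum fun t ht => ?_
      rw [Finset.mem_range] at ht
      have hν1 : OG (e - 1) ν := by
        have h12 := hNe.mul hiP
        rw [hν]
        exact h12.mono (by omega)
      have : OG ((t:ℤ) * (e-1)) (ν ^ t) := hν1.pow t
      have hneg : OG ((t:ℤ) * (e-1)) ((-ν) ^ t) := by
        have hh : (-ν) = (-1) * ν := by ring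
        rw [hh, mul_pow]
        intro d hd
        rw [HahnSeries.coeff_mul]
        refine Finset.sum_eq_zero fun ij hij => ?_
        rw [Finset.mem_addAntidiagonal] at hij
        obtain ⟨h1, h2, h3⟩ := hij
        exfalso
        rcases lt_or_ge ij.1 0 with hc | hc
        · refine h1 ?_
          have : ((-1 : LaurentSeries A)) ^ t = (-1) ^ t * 1 := by rw [mul_one]
          have hOne : OG 0 (((-1 : LaurentSeries A)) ^ t) := by
            have := (OG_one (A := A)).neg.pow t
            simpa using this
          exact hOne _ hc
        · refine h2 ?_
          refine this _ ?_
          have ht1 : (t:ℤ) * (e - 1) ≤ 0 := by nlinarith [Int.ofNat_nonneg t]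
          omega
      refine hneg.mono ?_
      have : (t:ℤ) ≤ (M:ℤ) - 1 := by omega
      nlinarith [this, he]
    have := hiP.mul hOS
    refine this.mono ?_
    rw [hDdef, hCdef]
    nlinarith
  have claim3 : ∀ n : ℕ, OG (-(n:ℤ) * D) ((Ring.inverse h) ^ n) := by
    intro n
    have := claim2.pow n
    exact this.mono (by push_cast; nlinarith)
  refine ⟨hU, fun k d hne => ⟨fun h0 => ?_, fun h0 => ?_⟩⟩
  · by_contra hc
    rw [lzpow_nonneg h0] at hne
    refine hne (claim1 k.toNat d ?_)
    omega
  · by_contra hc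
    rw [lzpow_neg' h0] at hne
    refine hne (claim3 (-k).toNat d ?_)
    have h1 : (((-k).toNat : ℤ)) = -k := by omega
    rw [h1, neg_neg]
    omega

/-! ### Stage 1: compositional right inverse of pure series -/

lemma compCoeff_eq_sum_pos {f h : LaurentSeries A} (hf : OG 1 f) (hh : OG 1 h) (d : ℤ) :
    compCoeff f h d = ∑ k ∈ Finset.Icc 1 (max d 1), f.coeff k * (lzpow h k).coeff d := by
  refine finsum_eq_finset_sum_of_support_subset _ ?_
  intro k hk
  simp only [Function.mem_support] at hk
  have hfk : f.coeff k ≠ 0 := fun h0 => hk (by rw [h0, zero_mul])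
  have hl : (lzpow h k).coeff d ≠ 0 := fun h0 => hk (by rw [h0, mul_zero])
  have hk1 : 1 ≤ k := by
    by_contra hc
    exact hfk (hf k (by omega))
  simp only [Finset.coe_Icc, Set.mem_Icc]
  refine ⟨hk1, ?_⟩
  rw [lzpow_nonneg (by omega)] at hl
  have := hh.pow k.toNat
  have hd : ¬ d < (k.toNat : ℤ) * 1 := fun hc => hl (this d hc)
  omega

lemma compCoeff_pos_vanish {f h : LaurentSeries A} (hf : OG 1 f) (hh : OG 1 h)
    {d : ℤ} (hd : d < 1) : compCoeff f h d = 0 := by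
  rw [compCoeff_eq_sum_pos hf hh]
  refine Finset.sum_eq_zero fun k hk => ?_
  rw [Finset.mem_Icc] at hk
  rw [lzpow_nonneg (by omega), (hh.pow k.toNat) d (by omega), mul_zero]

lemma compOK_pos {f h : LaurentSeries A} (hf : OG 1 f) (hh : OG 1 h) : CompOK f h :=
  ⟨1, fun _ hd => compCoeff_pos_vanish hf hh hd⟩

/-- First-order expansion of composition under a high-order perturbation. -/
lemma key1 {p h δ : LaurentSeries A} (hp : OG 1 p) (hh : OG 1 h) {s : ℤ} (hδ : OG s δ)
    (hs : 2 ≤ s) {d : ℤ} (hd : d < s + 1) :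
    compCoeff p (h + δ) d = compCoeff p h d + p.coeff 1 * δ.coeff d := by
  have hh' : OG 1 (h + δ) := hh.add (hδ.mono (by omega))
  rw [compCoeff_eq_sum_pos hp hh', compCoeff_eq_sum_pos hp hh]
  have diffpow : ∀ n : ℕ, 1 ≤ n → OG ((n:ℤ) - 1 + s) ((h + δ) ^ n - h ^ n) := by
    intro n hn
    induction n, hn using Nat.le_induction with
    | base =>
        simp only [pow_one, Nat.cast_one]
        have : h + δ - h = δ := by ring
        rw [this]
        exact hδ.mono (by omega)
    | succ n hn ih =>
        have hid : (h + δ) ^ (n+1) - h ^ (n+1)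
            = (h + δ) ^ n * δ + ((h + δ) ^ n - h ^ n) * h := by ring
        rw [hid]
        have h1 : OG ((n:ℤ) + s) ((h + δ) ^ n * δ) := by
          have := (hh'.pow n).mul hδ
          exact this.mono (by push_cast; omega)
        have h2 : OG ((n:ℤ) + s) (((h + δ) ^ n - h ^ n) * h) := by
          have := (ih).mul hh
          exact this.mono (by omega)
        have := h1.add h2
        exact this.mono (by push_cast; omega)
  have hterm : ∀ k ∈ Finset.Icc (1:ℤ) (max d 1),
      p.coeff k * (lzpow (h + δ) k).coeff d
        = p.coeff k * (lzpow h k).coeff d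
          + (if k = 1 then p.coeff 1 * δ.coeff d else 0) := by
    intro k hk
    rw [Finset.mem_Icc] at hk
    rw [lzpow_nonneg (by omega), lzpow_nonneg (by omega)]
    rcases eq_or_lt_of_le hk.1 with h1 | h1
    · subst h1
      rw [if_pos rfl, Int.toNat_one, pow_one, pow_one, HahnSeries.coeff_add]
      ring
    · rw [if_neg (by omega)]
      have heq : ((h + δ) ^ k.toNat).coeff d = (h ^ k.toNat).coeff d := by
        have hz := diffpow k.toNat (by omega) d (by omega)
        rw [HahnSeries.coeff_sub] at hz
        exact sub_eq_zero.mp hz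
      rw [heq, add_zero]
  rw [Finset.sum_congr rfl hterm, Finset.sum_add_distrib, Finset.sum_ite_eq' (Finset.Icc 1 (max d 1))
    (1:ℤ) (fun _ => p.coeff 1 * δ.coeff d), if_pos (by rw [Finset.mem_Icc]; omega)]

/-- The Newton iteration sequence for stage 1. -/
noncomputable def s1seq (p : LaurentSeries A) (v : A) : ℕ → LaurentSeries A
  | 0 => HahnSeries.single 1 v
  | (j+1) => s1seq p v j - v • (comp p (s1seq p v j) - HahnSeries.single 1 1)

lemma stage1 {p : LaurentSeries A} (hp : OG 1 p) {v : A} (huv : p.coeff 1 * v = 1) :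
    ∃ q : LaurentSeries A, OG 1 q ∧ q.coeff 1 = v ∧
      ∀ d, compCoeff p q d = (HahnSeries.single (1:ℤ) (1:A)).coeff d := by
  classical
  set X : LaurentSeries A := HahnSeries.single 1 1 with hX
  have hXc : ∀ d : ℤ, X.coeff d = if d = 1 then 1 else 0 := fun d => by
    rw [hX, HahnSeries.coeff_single]
    split <;> rfl
  have inv : ∀ j : ℕ, OG 1 (s1seq p v j) ∧ (s1seq p v j).coeff 1 = v ∧
      ∀ d : ℤ, d < (j:ℤ) + 2 → compCoeff p (s1seq p v j) d = X.coeff d := by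
    intro j
    induction j with
    | zero =>
        refine ⟨OG_single 1 v, by rw [s1seq]; exact HahnSeries.coeff_single_same 1 v, ?_⟩
        intro d hd
        have hsv : OG 1 (HahnSeries.single (1:ℤ) v) := OG_single 1 v
        rw [s1seq, compCoeff_eq_sum_pos hp hsv]
        rcases lt_or_ge d 1 with hd1 | hd1
        · rw [hXc, if_neg (by omega)]
          refine Finset.sum_eq_zero fun k hk => ?_
          rw [Finset.mem_Icc] at hk
          rw [lzpow_nonneg (by omega), (hsv.pow k.toNat) d (by omega), mul_zero]
        · have hd1' : d = 1 := by omega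
          subst hd1'
          rw [hXc, if_pos rfl]
          have hmax : max (1:ℤ) 1 = 1 := by omega
          rw [hmax, Finset.Icc_self, Finset.sum_singleton, lzpow_nonneg (by omega)]
          norm_num
          exact huv
    | succ j ih =>
        obtain ⟨h1, h2, h3⟩ := ih
        have hOK : CompOK p (s1seq p v j) := compOK_pos hp h1
        set E : LaurentSeries A := comp p (s1seq p v j) - X with hE
        have hEc : ∀ d : ℤ, E.coeff d = compCoeff p (s1seq p v j) d - X.coeff d := by
          intro d
          rw [hE, HahnSeries.coeff_sub, comp_coeff hOK]
        have hEOG : OG ((j:ℤ) + 2) E := by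
          intro d hd
          rw [hEc, h3 d hd, sub_self]
        have hseq : s1seq p v (j+1) = s1seq p v j + (-(v • E)) := by
          rw [s1seq]
          rw [sub_eq_add_neg, hE]
        have hδOG : OG ((j:ℤ) + 2) (-(v • E)) := hEOG.smul.neg
        have hO1 : OG 1 (s1seq p v (j+1)) := by
          rw [hseq]
          exact h1.add (hδOG.mono (by omega))
        refine ⟨hO1, ?_, ?_⟩
        · rw [hseq, HahnSeries.coeff_add, h2, hδOG 1 (by omega), add_zero]
        · intro d hd
          rw [hseq, key1 hp h1 hδOG (by omega) (by push_cast; push_cast at hd; omega)]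
          have hδc : (-(v • E)).coeff d = -(v * E.coeff d) := by
            rw [HahnSeries.coeff_neg, HahnSeries.coeff_smul, smul_eq_mul]
          rw [hδc]
          have : compCoeff p (s1seq p v j) d = X.coeff d + E.coeff d := by
            rw [hEc]; ring
          rw [this]
          calc X.coeff d + E.coeff d + p.coeff 1 * -(v * E.coeff d)
              = X.coeff d + (1 - p.coeff 1 * v) * E.coeff d := by ring
            _ = X.coeff d := by rw [huv]; ring
  -- stabilization
  have stab : ∀ (d : ℤ) (j : ℕ), d.toNat + 1 ≤ j →
      (s1seq p v j).coeff d = (s1seq p v (d.toNat + 1)).coeff d := by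
    intro d j hj
    induction j, hj using Nat.le_induction with
    | base => rfl
    | succ j hj ih =>
        obtain ⟨h1, h2, h3⟩ := inv j
        have hOK : CompOK p (s1seq p v j) := compOK_pos hp h1
        have hseq : s1seq p v (j+1) = s1seq p v j - v • (comp p (s1seq p v j) - X) := by
          rw [s1seq]
        rw [hseq, HahnSeries.coeff_sub, HahnSeries.coeff_smul, HahnSeries.coeff_sub,
          comp_coeff hOK, h3 d (by omega), sub_self, smul_zero, sub_zero, ih]
  set q : LaurentSeries A := ofc (fun d => (s1seq p v (d.toNat + 1)).coeff d) 1
    (fun d hd => (inv (d.toNat + 1)).1 d hd) with hq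
  have hq1 : OG 1 q := fun d hd => (inv (d.toNat + 1)).1 d hd
  have hqco : ∀ (d : ℤ) (j : ℕ), d < (j:ℤ) → q.coeff d = (s1seq p v j).coeff d := by
    intro d j hdj
    rcases lt_or_ge d 1 with hd1 | hd1
    · rw [hq1 d hd1, ((inv j).1) d hd1]
    · rw [hq, ofc_coeff, stab d j (by omega)]
  refine ⟨q, hq1, ?_, ?_⟩
  · have : q.coeff 1 = (s1seq p v 2).coeff 1 := hqco 1 2 (by omega)
    rw [this]
    exact (inv 2).2.1
  · intro d
    set J : ℕ := d.toNat + 2 with hJ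
    have hδOG : OG ((J:ℤ)) (q - s1seq p v J) := by
      intro e he
      rw [HahnSeries.coeff_sub, hqco e J (by omega), sub_self]
    have hqeq : q = s1seq p v J + (q - s1seq p v J) := by ring
    have h3 := (inv J).2.2
    rw [hqeq, key1 hp (inv J).1 hδOG (by omega) (by omega), h3 d (by push_cast; omega),
      hδOG d (by omega), mul_zero, add_zero]

/-! ### Stage 2: removing the nilpotent error -/

/-- Package form of `good_of_decomp`. -/
lemma good_package {h P N : LaurentSeries A} {e : ℤ} {M : ℕ}
    (hdec : h = P + N) (hP1 : OG 1 P) (hPu : IsUnit (P.coeff 1))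
    (he : e ≤ 0) (hNe : OG e N) (hNM : N ^ M = 0) (hM : 1 ≤ M) :
    ∃ C D : ℤ, 0 ≤ C ∧ 0 ≤ D ∧ IsUnit h ∧ Good h C D := by
  obtain ⟨hU, hG⟩ := good_of_decomp hdec hP1 hPu he hNe hNM hM
  have hM' : (1:ℤ) ≤ (M:ℤ) := by exact_mod_cast hM
  have hC : 0 ≤ ((M:ℤ) - 1) * (1 - e) := by nlinarith
  exact ⟨_, _, hC, by omega, hU, hG⟩

lemma X_coeff_one : ((HahnSeries.single 1 1 : LaurentSeries A)).coeff 1 = 1 :=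
  HahnSeries.coeff_single_same 1 1

/-- good data for `X + μ` when `μ` has coefficients in a nilpotent ideal. -/
lemma good_of_cin {I : Ideal A} {M : ℕ} (hM : 1 ≤ M) (hIM : I ^ M = ⊥)
    {μ : LaurentSeries A} (hμ : CIn I μ) :
    ∃ C D : ℤ, 0 ≤ C ∧ 0 ≤ D ∧ IsUnit (HahnSeries.single 1 1 + μ) ∧
      Good (HahnSeries.single 1 1 + μ) C D := by
  obtain ⟨e, he0, he⟩ := lb μ
  exact good_package rfl (OG_single 1 1) (by rw [X_coeff_one]; exact isUnit_one)
    he0 he (hμ.pow_eq_zero hIM) hM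

lemma compCoeff_X_right (f : LaurentSeries A) (d : ℤ) :
    compCoeff f (HahnSeries.single 1 1) d = f.coeff d := by
  rw [compCoeff]
  rw [finsum_eq_single _ d]
  · rw [lzpow_X, HahnSeries.coeff_single_same, mul_one]
  · intro b hb
    rw [lzpow_X, HahnSeries.coeff_single, if_neg (fun h => hb h.symm), mul_zero]

lemma compCoeff_X_left (r : LaurentSeries A) (d : ℤ) :
    compCoeff (HahnSeries.single 1 1) r d = r.coeff d := by
  rw [compCoeff]
  rw [finsum_eq_single _ 1]
  · rw [HahnSeries.coeff_single_same, lzpow_one, one_mul]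
  · intro b hb
    rw [HahnSeries.coeff_single, if_neg hb, zero_mul]

lemma compCoeff_add_left {f₁ f₂ h : LaurentSeries A} {C D : ℤ} (hG : Good h C D) (d : ℤ) :
    compCoeff (f₁ + f₂) h d = compCoeff f₁ h d + compCoeff f₂ h d := by
  obtain ⟨b1, _, hb1⟩ := lb f₁
  obtain ⟨b2, _, hb2⟩ := lb f₂
  have hfin : ∀ (f : LaurentSeries A) (bf : ℤ), (∀ k, k < bf → f.coeff k = 0) →
      (Function.support fun k => f.coeff k * (lzpow h k).coeff d).Finite := by
    intro f bf hbf
    refine (Set.finite_Icc bf (max (d + C) 0)).subset ?_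
    intro k hk
    simp only [Function.mem_support] at hk
    have hfk : f.coeff k ≠ 0 := fun h0 => hk (by rw [h0, zero_mul])
    have hl : (lzpow h k).coeff d ≠ 0 := fun h0 => hk (by rw [h0, mul_zero])
    have := hG k d hl
    simp only [Set.mem_Icc]
    constructor
    · by_contra hc; exact hfk (hbf k (by omega))
    · rcases le_or_gt 0 k with h0 | h0
      · exact le_trans (this.1 h0) (le_max_left _ _)
      · omega
  rw [compCoeff, compCoeff, compCoeff]
  have hcongr : ∀ k : ℤ, (f₁ + f₂).coeff k * (lzpow h k).coeff d
      = f₁.coeff k * (lzpow h k).coeff d + f₂.coeff k * (lzpow h k).coeff d := by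
    intro k
    rw [HahnSeries.coeff_add, add_mul]
  rw [finsum_congr hcongr]
  exact finsum_add_distrib (hfin f₁ b1 hb1) (hfin f₂ b2 hb2)

/-- Lipschitz estimate for composition in the ideal-adic filtration. -/
lemma lip {I : Ideal A} {s : ℕ} {f a b : LaurentSeries A} (hf : CIn I f)
    (hab : CIn (I ^ s) (a - b))
    {Ca Da Cb Db : ℤ}
    (hGa : Good (HahnSeries.single 1 1 + a) Ca Da) (hUa : IsUnit (HahnSeries.single 1 1 + a))
    (hGb : Good (HahnSeries.single 1 1 + b) Cb Db) (hUb : IsUnit (HahnSeries.single 1 1 + b))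
    (d : ℤ) :
    compCoeff f (HahnSeries.single 1 1 + a) d - compCoeff f (HahnSeries.single 1 1 + b) d
      ∈ I ^ (s + 1) := by
  obtain ⟨bf, hbf0, hbf⟩ := lb f
  set K : ℤ := max (max (d + Ca) 0) (max (d + Cb) 0) with hK
  have hpad : ∀ (r : LaurentSeries A) (C D : ℤ), Good r C D →
      compCoeff f r d = ∑ k ∈ Finset.Icc bf K, f.coeff k * (lzpow r k).coeff d →
        True := fun _ _ _ _ _ => trivial
  have hsum : ∀ (r : LaurentSeries A) (C D : ℤ), Good r C D → max (d + C) 0 ≤ K →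
      compCoeff f r d = ∑ k ∈ Finset.Icc bf K, f.coeff k * (lzpow r k).coeff d := by
    intro r C D hG hle
    rw [compCoeff_eq_sum hG hbf d]
    refine Finset.sum_subset (Finset.Icc_subset_Icc le_rfl hle) ?_
    intro k hk hnk
    rw [Finset.mem_Icc] at hk hnk
    have hk0 : max (d + C) 0 < k := by omega
    have := lzpow_OG hG k
    rcases le_or_gt 0 k with h0 | h0
    · rw [if_pos h0] at this
      rw [this d (by omega), mul_zero]
    · omega
  rw [hsum _ Ca Da hGa (le_max_left _ _), hsum _ Cb Db hGb (le_max_right _ _),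
    ← Finset.sum_sub_distrib]
  refine Ideal.sum_mem _ fun k hk => ?_
  have hdiff : CIn (I ^ s) (lzpow (HahnSeries.single 1 1 + a) k
      - lzpow (HahnSeries.single 1 1 + b) k) := by
    refine lzpow_sub_cin hUa hUb ?_ k
    have : HahnSeries.single 1 1 + a - (HahnSeries.single 1 1 + b) = a - b := by ring
    rw [this]
    exact hab
  have hmem : (lzpow (HahnSeries.single 1 1 + a) k).coeff d
      - (lzpow (HahnSeries.single 1 1 + b) k).coeff d ∈ I ^ s := by
    have := hdiff d
    rwa [HahnSeries.coeff_sub] at this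
  have : f.coeff k * (lzpow (HahnSeries.single 1 1 + a) k).coeff d
      - f.coeff k * (lzpow (HahnSeries.single 1 1 + b) k).coeff d
      = f.coeff k * ((lzpow (HahnSeries.single 1 1 + a) k).coeff d
        - (lzpow (HahnSeries.single 1 1 + b) k).coeff d) := by ring
  rw [this, pow_succ']
  exact Ideal.mul_mem_mul (hf k) hmem

/-- The stage-2 iteration. -/
noncomputable def s2seq (m : LaurentSeries A) : ℕ → LaurentSeries A
  | 0 => 0
  | (j+1) => -comp m (HahnSeries.single 1 1 + s2seq m j)

lemma stage2 {I : Ideal A} {M : ℕ} (hM : 1 ≤ M) (hIM : I ^ M = ⊥)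
    {m : LaurentSeries A} (hm : CIn I m) :
    ∃ μ : LaurentSeries A, CIn I μ ∧
      ∀ d, compCoeff (HahnSeries.single 1 1 + m) (HahnSeries.single 1 1 + μ) d
        = (HahnSeries.single (1:ℤ) (1:A)).coeff d := by
  classical
  -- invariant: coefficients in I
  have inv : ∀ j, CIn I (s2seq m j) := by
    intro j
    induction j with
    | zero => exact CIn_zero I
    | succ j ih =>
        obtain ⟨C, D, hC, hD, hU, hG⟩ := good_of_cin hM hIM ih
        have hOK : CompOK m (HahnSeries.single 1 1 + s2seq m j) := compOK_of_good hG hD m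
        intro d
        have : (s2seq m (j+1)).coeff d
            = -compCoeff m (HahnSeries.single 1 1 + s2seq m j) d := by
          rw [s2seq, HahnSeries.coeff_neg, comp_coeff hOK]
        rw [this]
        refine neg_mem ?_
        obtain ⟨bf, hbf0, hbf⟩ := lb m
        rw [compCoeff_eq_sum hG hbf d]
        exact Ideal.sum_mem _ fun k _ => Ideal.mul_mem_right _ _ (hm k)
  have diff : ∀ j, CIn (I ^ (j+1)) (s2seq m (j+1) - s2seq m j) := by
    intro j
    induction j with
    | zero =>
        intro d
        have h0 : s2seq m 1 - s2seq m 0 = -comp m (HahnSeries.single 1 1 + 0) := by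
          rw [show s2seq m 1 = -comp m (HahnSeries.single 1 1 + s2seq m 0) from rfl]
          rw [show s2seq m 0 = (0 : LaurentSeries A) from rfl]
          ring
        rw [h0, add_zero, HahnSeries.coeff_neg]
        have hOKX : CompOK m (HahnSeries.single 1 1) := by
          obtain ⟨C, D, hC, hD, hU, hG⟩ := good_of_cin hM hIM (CIn_zero I)
          rw [add_zero] at hG hU
          exact compOK_of_good hG hD m
        rw [comp_coeff hOKX, compCoeff_X_right]
        rw [pow_one]
        exact neg_mem (hm d)
    | succ j ih =>
        intro d
        obtain ⟨Ca, Da, hCa, hDa, hUa, hGa⟩ := good_of_cin hM hIM (inv j)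
        obtain ⟨Cb, Db, hCb, hDb, hUb, hGb⟩ := good_of_cin hM hIM (inv (j+1))
        have h0 : s2seq m (j+2) - s2seq m (j+1)
            = -(comp m (HahnSeries.single 1 1 + s2seq m (j+1)))
              + comp m (HahnSeries.single 1 1 + s2seq m j) := by
          rw [show s2seq m (j+2) = -comp m (HahnSeries.single 1 1 + s2seq m (j+1)) from rfl,
            show s2seq m (j+1) = -comp m (HahnSeries.single 1 1 + s2seq m j) from rfl]
          ring
        rw [h0, HahnSeries.coeff_add, HahnSeries.coeff_neg,
          comp_coeff (compOK_of_good hGb hDb m), comp_coeff (compOK_of_good hGa hDa m)]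
        have hab : CIn (I ^ (j+1)) (s2seq m j - s2seq m (j+1)) := by
          have h3 : s2seq m j - s2seq m (j+1) = -(s2seq m (j+1) - s2seq m j) := by ring
          rw [h3]
          exact ih.neg
        have := lip hm hab hGa hUa hGb hUb d
        convert this using 1
        ring
  set μ : LaurentSeries A := s2seq m M with hμdef
  have hstable : s2seq m (M+1) = μ := by
    have h1 : CIn (I ^ (M+1)) (s2seq m (M+1) - s2seq m M) := diff M
    have h2 : (I : Ideal A) ^ (M+1) = ⊥ := by
      rw [pow_succ, hIM]
      simp
    rw [h2] at h1
    have := h1.eq_zero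
    rw [sub_eq_zero] at this
    exact this
  refine ⟨μ, inv M, ?_⟩
  intro d
  obtain ⟨C, D, hC, hD, hU, hG⟩ := good_of_cin hM hIM (inv M)
  rw [compCoeff_add_left hG, compCoeff_X_left]
  have hOK : CompOK m (HahnSeries.single 1 1 + μ) := compOK_of_good hG hD m
  have h1 : μ.coeff d = -compCoeff m (HahnSeries.single 1 1 + μ) d := by
    conv_lhs => rw [← hstable]
    rw [show s2seq m (M+1) = -comp m (HahnSeries.single 1 1 + s2seq m M) from rfl]
    rw [HahnSeries.coeff_neg, ← hμdef, comp_coeff hOK]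
  rw [HahnSeries.coeff_add, h1]
  ring

lemma sum_shift {M : Type*} [AddCommMonoid M] (a lo hi : ℤ) (G : ℤ → M) :
    ∑ m ∈ Finset.Icc lo hi, G m = ∑ j ∈ Finset.Icc (lo - a) (hi - a), G (j + a) := by
  refine Finset.sum_nbij' (i := fun m => m - a) (j := fun j => j + a) ?_ ?_ ?_ ?_ ?_
  · intro x hx; rw [Finset.mem_Icc] at hx ⊢; omega
  · intro x hx; rw [Finset.mem_Icc] at hx ⊢; omega
  · intro x _; omega
  · intro x _; omega
  · intro x _; rw [sub_add_cancel]

/-- Multiplicativity of composition in the left argument. -/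
lemma comp_mul {h : LaurentSeries A} {C D : ℤ} (hG : Good h C D) (hC : 0 ≤ C) (hD : 0 ≤ D)
    (hU : IsUnit h) (z w : LaurentSeries A) (d : ℤ) :
    compCoeff (z * w) h d = ((comp z h) * (comp w h)).coeff d := by
  classical
  obtain ⟨bz, hbz0, hbz⟩ := lb z
  obtain ⟨bw, hbw0, hbw⟩ := lb w
  set b : ℤ := min bz bw with hb
  have hb0 : b ≤ 0 := by omega
  have hzb : ∀ i, i < b → z.coeff i = 0 := fun i hi => hbz i (by omega)
  have hwb : ∀ i, i < b → w.coeff i = 0 := fun i hi => hbw i (by omega)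
  set lo : ℤ := min (-C) (b * D) with hlo
  have hlo0 : lo ≤ 0 := by omega
  have star : ∀ k d' : ℤ, b ≤ k → (lzpow h k).coeff d' ≠ 0 → lo ≤ d' := by
    intro k d' hk hne
    have := hG k d' hne
    rcases le_or_gt 0 k with h0 | h0
    · have := this.1 h0; omega
    · have h1 := this.2 h0
      have h2 : b * D ≤ k * D := mul_le_mul_of_nonneg_right hk hD
      omega
  have vanlow : ∀ (f : LaurentSeries A), (∀ i, i < b → f.coeff i = 0) →
      ∀ e, e < lo → compCoeff f h e = 0 := by
    intro f hbf e he
    rw [compCoeff_eq_sum hG hbf e]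
    refine Finset.sum_eq_zero fun k hk => ?_
    rw [Finset.mem_Icc] at hk
    by_contra hne
    have hl : (lzpow h k).coeff e ≠ 0 := fun h0 => hne (by rw [h0, mul_zero])
    exact absurd (star k e hk.1 hl) (by omega)
  set T : ℤ := max (d - lo + C) 0 with hT
  have hTT' : max (d + C) 0 ≤ T := by omega
  have etavan : ∀ i d' : ℤ, 0 ≤ i → d' + C < i → (lzpow h i).coeff d' = 0 := by
    intro i d' h0 hlt
    have := lzpow_OG hG i
    rw [if_pos h0] at this
    exact this d' (by omega)
  -- LHS
  have hzw : ∀ i, i < b + b → (z * w).coeff i = 0 := by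
    intro i hi
    exact (OG.mul (a := b) (b := b) hzb hwb) i hi
  have L0 : compCoeff (z * w) h d
      = ∑ m ∈ Finset.Icc (b + b) (max (d + C) 0), (z * w).coeff m * (lzpow h m).coeff d :=
    compCoeff_eq_sum hG hzw d
  have L1 : compCoeff (z * w) h d
      = ∑ m ∈ Finset.Icc (b + b) T, (z * w).coeff m * (lzpow h m).coeff d := by
    rw [L0]
    refine Finset.sum_subset (Finset.Icc_subset_Icc le_rfl hTT') ?_
    intro m hm hnm
    rw [Finset.mem_Icc] at hm hnm
    rw [etavan m d (by omega) (by omega), mul_zero]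
  have L2 : ∀ m ∈ Finset.Icc (b + b) T,
      (z * w).coeff m = ∑ i ∈ Finset.Icc b (T - b), z.coeff i * w.coeff (m - i) := by
    intro m hm
    rw [Finset.mem_Icc] at hm
    rw [mulc z w m b (m - b) hzb (fun i hi => hwb _ (by omega))]
    refine Finset.sum_subset (Finset.Icc_subset_Icc le_rfl (by omega)) ?_
    intro i hi hni
    rw [Finset.mem_Icc] at hi
    rw [Finset.mem_Icc] at hni
    rw [hwb (m - i) (by omega), mul_zero]
  have L3 : compCoeff (z * w) h d
      = ∑ i ∈ Finset.Icc b (T - b), ∑ m ∈ Finset.Icc (b + b) T,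
          z.coeff i * w.coeff (m - i) * (lzpow h m).coeff d := by
    rw [L1, Finset.sum_congr rfl (fun m hm => by rw [L2 m hm, Finset.sum_mul])]
    exact Finset.sum_comm
  have L4 : compCoeff (z * w) h d
      = ∑ i ∈ Finset.Icc b (T - b), ∑ j ∈ Finset.Icc b (T - b), z.coeff i * w.coeff j * (lzpow h (i + j)).coeff d := by
    rw [L3]
    refine Finset.sum_congr rfl fun i hi => ?_
    rw [Finset.mem_Icc] at hi
    have step1 : ∑ m ∈ Finset.Icc (b + b) T, z.coeff i * w.coeff (m - i) * (lzpow h m).coeff d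
        = ∑ m ∈ Finset.Icc (b + i) (T - b + i),
            z.coeff i * w.coeff (m - i) * (lzpow h m).coeff d := by
      refine sumvan ?_ ?_
      · intro m hm hnm
        rw [Finset.mem_Icc] at hm
        rw [Finset.mem_Icc] at hnm
        rw [hwb (m - i) (by omega), mul_zero, zero_mul]
      · intro m hm hnm
        rw [Finset.mem_Icc] at hm
        rw [Finset.mem_Icc] at hnm
        rw [etavan m d (by omega) (by omega), mul_zero]
    rw [step1]
    refine Finset.sum_nbij' (i := fun m => m - i) (j := fun j => j + i) ?_ ?_ ?_ ?_ ?_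
    · intro x hx; rw [Finset.mem_Icc] at hx ⊢; omega
    · intro x hx; rw [Finset.mem_Icc] at hx ⊢; omega
    · intro x _; omega
    · intro x _; omega
    · intro x _
      rw [show i + (x - i) = x from by ring]
  -- RHS
  have hOKz : CompOK z h := compOK_of_good hG hD z
  have hOKw : CompOK w h := compOK_of_good hG hD w
  have R0 : ((comp z h) * (comp w h)).coeff d
      = ∑ e ∈ Finset.Icc lo (d - lo), (comp z h).coeff e * (comp w h).coeff (d - e) := by
    refine mulc _ _ d lo (d - lo) ?_ ?_
    · intro e he
      rw [comp_coeff hOKz]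
      exact vanlow z hzb e he
    · intro e he
      rw [comp_coeff hOKw]
      exact vanlow w hwb _ (by omega)
  have R1 : ∀ e ∈ Finset.Icc lo (d - lo),
      (comp z h).coeff e = ∑ i ∈ Finset.Icc b (T - b), z.coeff i * (lzpow h i).coeff e := by
    intro e he
    rw [Finset.mem_Icc] at he
    rw [comp_coeff hOKz, compCoeff_eq_sum hG hzb e]
    refine Finset.sum_subset (Finset.Icc_subset_Icc le_rfl (by omega)) ?_
    intro i hi hni
    rw [Finset.mem_Icc] at hi
    rw [Finset.mem_Icc] at hni
    rw [etavan i e (by omega) (by omega), mul_zero]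
  have R2 : ∀ e ∈ Finset.Icc lo (d - lo),
      (comp w h).coeff (d - e) = ∑ j ∈ Finset.Icc b (T - b), w.coeff j * (lzpow h j).coeff (d - e) := by
    intro e he
    rw [Finset.mem_Icc] at he
    rw [comp_coeff hOKw, compCoeff_eq_sum hG hwb (d - e)]
    refine Finset.sum_subset (Finset.Icc_subset_Icc le_rfl (by omega)) ?_
    intro j hj hnj
    rw [Finset.mem_Icc] at hj
    rw [Finset.mem_Icc] at hnj
    rw [etavan j (d - e) (by omega) (by omega), mul_zero]
  have R3 : ((comp z h) * (comp w h)).coeff d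
      = ∑ i ∈ Finset.Icc b (T - b), ∑ j ∈ Finset.Icc b (T - b), z.coeff i * w.coeff j *
          (∑ e ∈ Finset.Icc lo (d - lo), (lzpow h i).coeff e * (lzpow h j).coeff (d - e)) := by
    rw [R0, Finset.sum_congr rfl (fun e he => by
      rw [R1 e he, R2 e he, Finset.sum_mul_sum])]
    rw [Finset.sum_comm]
    refine Finset.sum_congr rfl fun i _ => ?_
    rw [Finset.sum_comm]
    refine Finset.sum_congr rfl fun j _ => ?_
    rw [Finset.mul_sum]
    refine Finset.sum_congr rfl fun e _ => ?_
    ring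
  rw [L4, R3]
  refine Finset.sum_congr rfl fun i hi => Finset.sum_congr rfl fun j hj => ?_
  rw [Finset.mem_Icc] at hi hj
  congr 1
  rw [lzpow_add hU i j]
  refine mulc _ _ d lo (d - lo) ?_ ?_
  · intro e he
    by_contra hne
    exact absurd (star i e hi.1 hne) (by omega)
  · intro e he
    by_contra hne
    exact absurd (star j (d - e) hj.1 hne) (by omega)

lemma comp_one {h : LaurentSeries A} {C D : ℤ} (hG : Good h C D) (hD : 0 ≤ D) :
    comp (1 : LaurentSeries A) h = 1 := by
  ext d
  rw [comp_coeff (compOK_of_good hG hD 1)]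
  rw [compCoeff, finsum_eq_single _ 0]
  · rw [HahnSeries.coeff_one, if_pos rfl, lzpow_zero, one_mul]
  · intro b hb
    rw [HahnSeries.coeff_one, if_neg hb, zero_mul]

lemma comp_mul_series {h : LaurentSeries A} {C D : ℤ} (hG : Good h C D) (hC : 0 ≤ C)
    (hD : 0 ≤ D) (hU : IsUnit h) (z w : LaurentSeries A) :
    comp (z * w) h = comp z h * comp w h := by
  ext d
  rw [comp_coeff (compOK_of_good hG hD _)]
  exact comp_mul hG hC hD hU z w d

lemma comp_pow {h : LaurentSeries A} {C D : ℤ} (hG : Good h C D) (hC : 0 ≤ C)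
    (hD : 0 ≤ D) (hU : IsUnit h) (z : LaurentSeries A) (n : ℕ) :
    comp (z ^ n) h = (comp z h) ^ n := by
  induction n with
  | zero => rw [pow_zero, pow_zero]; exact comp_one hG hD
  | succ n ih => rw [pow_succ, pow_succ, comp_mul_series hG hC hD hU, ih]

lemma comp_unit {g h : LaurentSeries A} {C D : ℤ} (hG : Good h C D) (hC : 0 ≤ C)
    (hD : 0 ≤ D) (hU : IsUnit h) (hUg : IsUnit g) :
    IsUnit (comp g h) ∧ comp (Ring.inverse g) h = Ring.inverse (comp g h) := by
  have hkey : comp g h * comp (Ring.inverse g) h = 1 := by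
    rw [← comp_mul_series hG hC hD hU, Ring.mul_inverse_cancel _ hUg, comp_one hG hD]
  have hunit : IsUnit (comp g h) := IsUnit.of_mul_eq_one _ hkey
  refine ⟨hunit, ?_⟩
  calc comp (Ring.inverse g) h
      = (Ring.inverse (comp g h) * comp g h) * comp (Ring.inverse g) h := by
        rw [Ring.inverse_mul_cancel _ hunit, one_mul]
    _ = Ring.inverse (comp g h) * (comp g h * comp (Ring.inverse g) h) := by ring
    _ = Ring.inverse (comp g h) := by rw [hkey, mul_one]

lemma comp_lzpow {g h : LaurentSeries A} {C D : ℤ} (hG : Good h C D) (hC : 0 ≤ C)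
    (hD : 0 ≤ D) (hU : IsUnit h) (hUg : IsUnit g) (k : ℤ) :
    comp (lzpow g k) h = lzpow (comp g h) k := by
  obtain ⟨hunit, hinv⟩ := comp_unit hG hC hD hU hUg
  rcases le_or_gt 0 k with h0 | h0
  · rw [lzpow_nonneg h0, lzpow_nonneg h0, comp_pow hG hC hD hU]
  · rw [lzpow_neg' h0, lzpow_neg' h0, comp_pow hG hC hD hU, hinv]

/-- Associativity of composition (coefficientwise form). -/
lemma comp_assoc {g h : LaurentSeries A} {Cg Dg Ch Dh C3 D3 : ℤ}
    (hGg : Good g Cg Dg) (hCg : 0 ≤ Cg) (hDg : 0 ≤ Dg) (hUg : IsUnit g)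
    (hGh : Good h Ch Dh) (hCh : 0 ≤ Ch) (hDh : 0 ≤ Dh) (hUh : IsUnit h)
    (hG3 : Good (comp g h) C3 D3)
    (f : LaurentSeries A) (d : ℤ) :
    compCoeff (comp f g) h d = compCoeff f (comp g h) d := by
  classical
  obtain ⟨bf, hbf0, hbf⟩ := lb f
  obtain ⟨bc, hbc0, hbc⟩ := lb (comp f g)
  set Tm : ℤ := max (d + Ch) 0 with hTm
  set Tk : ℤ := max (Tm + Cg) 0 with hTk
  set bm : ℤ := min bc (min (-Cg) (bf * Dg)) with hbm
  have hbmle : ∀ m, m < bm → (comp f g).coeff m = 0 := fun m hm => hbc m (by omega)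
  have glow : ∀ k m : ℤ, bf ≤ k → (lzpow g k).coeff m ≠ 0 → min (-Cg) (bf * Dg) ≤ m := by
    intro k m hk hne
    have := hGg k m hne
    rcases le_or_gt 0 k with h0 | h0
    · have := this.1 h0; omega
    · have h1 := this.2 h0
      have h2 : bf * Dg ≤ k * Dg := mul_le_mul_of_nonneg_right hk hDg
      omega
  have etag : ∀ k m : ℤ, 0 ≤ k → m + Cg < k → (lzpow g k).coeff m = 0 := by
    intro k m h0 hlt
    have := lzpow_OG hGg k
    rw [if_pos h0] at this
    exact this m (by omega)
  -- identity for eta of the composite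
  have hlz : ∀ k : ℤ, comp (lzpow g k) h = lzpow (comp g h) k :=
    comp_lzpow hGh hCh hDh hUh hUg
  have hlzc : ∀ k d' : ℤ, (lzpow (comp g h) k).coeff d' = compCoeff (lzpow g k) h d' := by
    intro k d'
    rw [← hlz k, comp_coeff (compOK_of_good hGh hDh _)]
  -- LHS
  have L0 : compCoeff (comp f g) h d
      = ∑ m ∈ Finset.Icc bm Tm, (comp f g).coeff m * (lzpow h m).coeff d := by
    rw [compCoeff_eq_sum hGh hbmle d]
  have L1 : ∀ m ∈ Finset.Icc bm Tm, (comp f g).coeff m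
      = ∑ k ∈ Finset.Icc bf Tk, f.coeff k * (lzpow g k).coeff m := by
    intro m hm
    rw [Finset.mem_Icc] at hm
    rw [comp_coeff (compOK_of_good hGg hDg f), compCoeff_eq_sum hGg hbf m]
    refine Finset.sum_subset (Finset.Icc_subset_Icc le_rfl (by omega)) ?_
    intro k hk hnk
    rw [Finset.mem_Icc] at hk hnk
    rw [etag k m (by omega) (by omega), mul_zero]
  have L2 : compCoeff (comp f g) h d
      = ∑ k ∈ Finset.Icc bf Tk, f.coeff k *
          (∑ m ∈ Finset.Icc bm Tm, (lzpow g k).coeff m * (lzpow h m).coeff d) := by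
    rw [L0, Finset.sum_congr rfl (fun m hm => by rw [L1 m hm, Finset.sum_mul])]
    rw [Finset.sum_comm]
    refine Finset.sum_congr rfl fun k _ => ?_
    rw [Finset.mul_sum]
    refine Finset.sum_congr rfl fun m _ => ?_
    ring
  have L3 : ∀ k ∈ Finset.Icc bf Tk,
      (∑ m ∈ Finset.Icc bm Tm, (lzpow g k).coeff m * (lzpow h m).coeff d)
        = (lzpow (comp g h) k).coeff d := by
    intro k hk
    rw [Finset.mem_Icc] at hk
    rw [hlzc k d]
    have hglow : ∀ m, m < (if 0 ≤ k then k - Cg else k * Dg) → (lzpow g k).coeff m = 0 :=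
      fun m hm => lzpow_OG hGg k m hm
    rw [compCoeff_eq_sum hGh hglow d]
    refine (Finset.sum_subset (Finset.Icc_subset_Icc ?_ le_rfl) ?_).symm
    · -- bm ≤ if 0 ≤ k then k - Cg else k * Dg
      rcases le_or_gt 0 k with h0 | h0
      · rw [if_pos h0]; omega
      · rw [if_neg (by omega)]
        have h2 : bf * Dg ≤ k * Dg := mul_le_mul_of_nonneg_right hk.1 hDg
        omega
    · intro m hm hnm
      rw [Finset.mem_Icc] at hm hnm
      have : m < (if 0 ≤ k then k - Cg else k * Dg) := by
        rcases le_or_gt 0 k with h0 | h0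
        · rw [if_pos h0]
          rw [if_pos h0] at hnm
          omega
        · rw [if_neg (by omega)]
          rw [if_neg (by omega)] at hnm
          omega
      rw [hglow m this, zero_mul]
  have L4 : compCoeff (comp f g) h d
      = ∑ k ∈ Finset.Icc bf Tk, f.coeff k * (lzpow (comp g h) k).coeff d := by
    rw [L2]
    exact Finset.sum_congr rfl fun k hk => by rw [L3 k hk]
  -- RHS
  have R0 : compCoeff f (comp g h) d
      = ∑ k ∈ Finset.Icc bf (max (d + C3) 0), f.coeff k * (lzpow (comp g h) k).coeff d :=
    compCoeff_eq_sum hG3 hbf d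
  rw [L4, R0]
  refine sumvan ?_ ?_
  · intro k hk hnk
    rw [Finset.mem_Icc] at hk hnk
    have h0 : 0 ≤ k := by omega
    have := lzpow_OG hG3 k
    rw [if_pos h0] at this
    rw [this d (by omega), mul_zero]
  · intro k hk hnk
    rw [Finset.mem_Icc] at hk hnk
    have h0 : 0 ≤ k := by omega
    have hkT : Tm + Cg < k := by omega
    rw [hlzc k d]
    have hglow : ∀ m, m < (if 0 ≤ k then k - Cg else k * Dg) → (lzpow g k).coeff m = 0 :=
      fun m hm => lzpow_OG hGg k m hm
    rw [compCoeff_eq_sum hGh hglow d]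
    have hempty : Finset.Icc (if 0 ≤ k then k - Cg else k * Dg) (max (d + Ch) 0) = ∅ := by
      rw [if_pos h0]
      rw [Finset.Icc_eq_empty_iff]
      omega
    rw [hempty, Finset.sum_empty, mul_zero]

/-! ### Assembly -/

lemma span_nilpotent (s : Finset A) (hs : ∀ a ∈ s, IsNilpotent a) :
    ∃ M : ℕ, 1 ≤ M ∧ (Ideal.span (s : Set A)) ^ M = ⊥ := by
  classical
  induction s using Finset.induction_on with
  | empty =>
      refine ⟨1, le_rfl, ?_⟩
      rw [pow_one]
      simp
  | @insert a s ha ih =>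
      obtain ⟨Ms, hMs1, hMs⟩ := ih (fun x hx => hs x (Finset.mem_insert_of_mem hx))
      obtain ⟨na, hna⟩ := hs a (Finset.mem_insert_self a s)
      refine ⟨na + Ms, by omega, ?_⟩
      have hsplit : Ideal.span ((insert a s : Finset A) : Set A)
          = Ideal.span {a} ⊔ Ideal.span (s : Set A) := by
        rw [Finset.coe_insert, Ideal.span_insert]
      have hbound := Ideal.sup_pow_add_le_pow_sup_pow
        (I := Ideal.span {a}) (J := Ideal.span (s : Set A)) (n := na) (m := Ms)
      have ha0 : (Ideal.span {a} : Ideal A) ^ na = ⊥ := by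
        rw [Ideal.span_singleton_pow, hna, Ideal.span_singleton_eq_bot]
      rw [hsplit]
      refine le_bot_iff.mp ?_
      calc (Ideal.span {a} ⊔ Ideal.span (s : Set A)) ^ (na + Ms)
          ≤ Ideal.span {a} ^ na ⊔ Ideal.span (s : Set A) ^ Ms := hbound
        _ ≤ ⊥ := by rw [ha0, hMs]; simp

/-- The positive part of a Laurent series. -/
noncomputable def posPart (g : LaurentSeries A) : LaurentSeries A :=
  ofc (fun k => if 1 ≤ k then g.coeff k else 0) 1 (fun d hd => if_neg (by omega))

lemma posPart_OG (g : LaurentSeries A) : OG 1 (posPart g) :=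
  fun d hd => if_neg (by omega)

lemma posPart_coeff (g : LaurentSeries A) (k : ℤ) :
    (posPart g).coeff k = if 1 ≤ k then g.coeff k else 0 := rfl

lemma gcheck_data {g : LaurentSeries A} (hg : g ∈ Gcheck A) :
    ∃ (I : Ideal A) (M : ℕ),
      1 ≤ M ∧ I ^ M = ⊥ ∧ I ≤ nilradical A ∧
      CIn I (g - posPart g) ∧ (∀ d : ℤ, d ≤ 0 → g.coeff d ∈ I) := by
  classical
  obtain ⟨bg, hbg0, hbg⟩ := lb g
  set I : Ideal A := Ideal.span (((Finset.Icc bg 0).image g.coeff : Finset A) : Set A) with hI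
  obtain ⟨M, hM1, hM⟩ := span_nilpotent ((Finset.Icc bg 0).image g.coeff) (by
    intro x hx
    rw [Finset.mem_image] at hx
    obtain ⟨d, hd, rfl⟩ := hx
    rw [Finset.mem_Icc] at hd
    exact hg.2 d (by omega))
  have hmem : ∀ d : ℤ, d ≤ 0 → g.coeff d ∈ I := by
    intro d hd
    rcases lt_or_ge d bg with h1 | h1
    · rw [hbg d h1]; exact I.zero_mem
    · refine Ideal.subset_span ?_
      rw [Finset.coe_image]
      exact ⟨d, by simp [Finset.mem_Icc]; omega, rfl⟩
  have hnil : I ≤ nilradical A := by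
    rw [hI, Ideal.span_le]
    intro x hx
    rw [Finset.coe_image] at hx
    obtain ⟨d, hd, rfl⟩ := hx
    simp only [Finset.mem_coe, Finset.mem_Icc] at hd
    exact hg.2 d (by omega)
  refine ⟨I, M, hM1, hM, hnil, ?_, hmem⟩
  intro d
  rw [HahnSeries.coeff_sub, posPart_coeff]
  rcases le_or_gt 1 d with h1 | h1
  · rw [if_pos h1, sub_self]; exact I.zero_mem
  · rw [if_neg (by omega), sub_zero]
    exact hmem d (by omega)

lemma gcheck_good {g : LaurentSeries A} (hg : g ∈ Gcheck A) :
    ∃ C D : ℤ, 0 ≤ C ∧ 0 ≤ D ∧ IsUnit g ∧ Good g C D := by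
  obtain ⟨I, M, hM1, hM, hnil, hcin, hmem⟩ := gcheck_data hg
  obtain ⟨e, he0, he⟩ := lb (g - posPart g)
  refine good_package (P := posPart g) (N := g - posPart g) (by ring) (posPart_OG g) ?_
    he0 he (hcin.pow_eq_zero hM) hM1
  rw [posPart_coeff, if_pos le_rfl]
  exact hg.1

lemma good_X : ∃ C D : ℤ, 0 ≤ C ∧ 0 ≤ D ∧
    IsUnit (HahnSeries.single (1:ℤ) (1:A)) ∧ Good (HahnSeries.single (1:ℤ) (1:A)) C D := by
  have h0 : CIn (⊥ : Ideal A) 0 := CIn_zero ⊥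
  have := good_of_cin (I := (⊥ : Ideal A)) (M := 1) le_rfl (by rw [pow_one]) h0
  simpa using this

lemma right_inv {g : LaurentSeries A} (hg : g ∈ Gcheck A) :
    ∃ h, h ∈ Gcheck A ∧
      ∀ d, compCoeff g h d = (HahnSeries.single (1:ℤ) (1:A)).coeff d := by
  classical
  obtain ⟨I, M, hM1, hIM, hnil, hcinN, hmem⟩ := gcheck_data hg
  set p : LaurentSeries A := posPart g with hpdef
  have hp1 : OG 1 p := posPart_OG g
  have hpc : p.coeff 1 = g.coeff 1 := by rw [hpdef, posPart_coeff, if_pos le_rfl]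
  obtain ⟨v, huv⟩ := hg.1.exists_right_inv
  have huv' : p.coeff 1 * v = 1 := by rw [hpc]; exact huv
  obtain ⟨q, hq1, hqv, hq⟩ := stage1 hp1 huv'
  have hvu : IsUnit v := IsUnit.of_mul_eq_one (p.coeff 1) (by rw [mul_comm]; exact huv')
  obtain ⟨Cq, Dq, hCq, hDq, hUq, hGq⟩ :
      ∃ C D : ℤ, 0 ≤ C ∧ 0 ≤ D ∧ IsUnit q ∧ Good q C D := by
    refine good_package (P := q) (N := 0) (e := 0) (M := 1) (by ring) hq1 ?_ le_rfl
      (OG_zero 0) (by rw [pow_one]) le_rfl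
    rw [hqv]
    exact hvu
  have hOKgq : CompOK g q := compOK_of_good hGq hDq g
  set m : LaurentSeries A := comp g q - HahnSeries.single 1 1 with hmdef
  have hXm : HahnSeries.single 1 1 + m = comp g q := by rw [hmdef]; ring
  obtain ⟨bg', hbg'0, hbg'⟩ := lb g
  have hqpow : ∀ (k : ℤ), 1 ≤ k → ∀ d : ℤ, d < k → (lzpow q k).coeff d = 0 := by
    intro k hk d hd
    rw [lzpow_nonneg (by omega)]
    exact (hq1.pow k.toNat) d (by simp; omega)
  have hm : CIn I m := by
    intro d
    have hmc : m.coeff d = compCoeff g q d - (HahnSeries.single (1:ℤ) (1:A)).coeff d := by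
      rw [hmdef, HahnSeries.coeff_sub, comp_coeff hOKgq]
    have hsplit := Finset.sum_filter_add_sum_filter_not (Finset.Icc bg' (max (d + Cq) 0))
      (fun k => 1 ≤ k) (fun k => g.coeff k * (lzpow q k).coeff d)
    have hA : ∑ k ∈ (Finset.Icc bg' (max (d + Cq) 0)).filter (fun k => 1 ≤ k),
        g.coeff k * (lzpow q k).coeff d = compCoeff p q d := by
      rw [compCoeff_eq_sum_pos hp1 hq1 d]
      have hswitch : ∀ k ∈ (Finset.Icc bg' (max (d + Cq) 0)).filter (fun k => 1 ≤ k),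
          g.coeff k * (lzpow q k).coeff d = p.coeff k * (lzpow q k).coeff d := by
        intro k hk
        rw [Finset.mem_filter] at hk
        rw [hpdef, posPart_coeff, if_pos hk.2]
      rw [Finset.sum_congr rfl hswitch]
      refine sumvan ?_ ?_
      · intro k hk hnk
        rw [Finset.mem_filter, Finset.mem_Icc] at hk
        rw [Finset.mem_Icc] at hnk
        rw [hqpow k (by omega) d (by omega), mul_zero]
      · intro k hk hnk
        rw [Finset.mem_Icc] at hk
        rw [Finset.mem_filter, Finset.mem_Icc] at hnk
        rw [hqpow k (by omega) d (by omega), mul_zero]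
    have hB : ∑ k ∈ (Finset.Icc bg' (max (d + Cq) 0)).filter (fun k => ¬ 1 ≤ k),
        g.coeff k * (lzpow q k).coeff d ∈ I := by
      refine Ideal.sum_mem _ fun k hk => ?_
      rw [Finset.mem_filter] at hk
      exact Ideal.mul_mem_right _ _ (hmem k (by omega))
    rw [hmc, compCoeff_eq_sum hGq hbg' d, ← hsplit, hA, hq d]
    simpa using hB
  obtain ⟨μ, hμ, hs2⟩ := stage2 hM1 hIM hm
  obtain ⟨Cr, Dr, hCr, hDr, hUr, hGr⟩ := good_of_cin hM1 hIM hμ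
  set r : LaurentSeries A := HahnSeries.single 1 1 + μ with hrdef
  set h : LaurentSeries A := comp q r with hhdef
  have hOKqr : CompOK q r := compOK_of_good hGr hDr q
  have hhc : ∀ d, h.coeff d = compCoeff q r d := fun d => by
    rw [hhdef]; exact comp_coeff hOKqr d
  have rpow : ∀ (k : ℕ) (d : ℤ), (r ^ k).coeff d - (if d = (k:ℤ) then 1 else 0) ∈ I := by
    intro k d
    rw [hrdef, add_pow, coeff_sum, Finset.sum_range_succ]
    have hlast : ((HahnSeries.single (1:ℤ) (1:A)) ^ k * μ ^ (k - k) *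
        ((k.choose k : ℕ) : LaurentSeries A)).coeff d = (if d = (k:ℤ) then 1 else 0) := by
      rw [Nat.sub_self, pow_zero, mul_one, Nat.choose_self, Nat.cast_one, mul_one,
        HahnSeries.single_pow]
      have h1 : k • (1:ℤ) = (k:ℤ) := by rw [nsmul_eq_mul, mul_one]
      rw [h1, one_pow, HahnSeries.coeff_single]
      split <;> rfl
    rw [hlast]
    have hrw : (∑ i ∈ Finset.range k, ((HahnSeries.single (1:ℤ) (1:A)) ^ i * μ ^ (k - i) *
          ((k.choose i : ℕ) : LaurentSeries A)).coeff d)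
        + (if d = (k:ℤ) then 1 else 0) - (if d = (k:ℤ) then 1 else 0)
        = ∑ i ∈ Finset.range k, ((HahnSeries.single (1:ℤ) (1:A)) ^ i * μ ^ (k - i) *
          ((k.choose i : ℕ) : LaurentSeries A)).coeff d := by ring
    rw [hrw]
    refine Ideal.sum_mem _ fun i hi => ?_
    rw [Finset.mem_range] at hi
    have hcin : CIn I ((HahnSeries.single (1:ℤ) (1:A)) ^ i * μ ^ (k - i) *
        ((k.choose i : ℕ) : LaurentSeries A)) := by
      refine CIn.mul_right ?_ _
      refine CIn.mul_left _ ?_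
      exact (hμ.pow (k - i)).mono (Ideal.pow_le_self (by omega))
    exact hcin d
  have hle0 : ∀ d : ℤ, d ≤ 0 → h.coeff d ∈ I := by
    intro d hd
    rw [hhc d, compCoeff_eq_sum hGr (fun k hk => hq1 k hk) d]
    refine Ideal.sum_mem _ fun k hk => ?_
    rw [Finset.mem_Icc] at hk
    have hw := rpow k.toNat d
    rw [if_neg (by omega)] at hw
    rw [sub_zero] at hw
    rw [lzpow_nonneg (by omega)]
    exact Ideal.mul_mem_left _ _ hw
  have hco1 : h.coeff 1 - v ∈ I := by
    rw [hhc 1, compCoeff_eq_sum hGr (fun k hk => hq1 k hk) 1]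
    have hterm : ∀ k ∈ Finset.Icc (1:ℤ) (max (1 + Cr) 0),
        q.coeff k * (lzpow r k).coeff 1
          = (if (1:ℤ) = k then q.coeff k else 0)
            + q.coeff k * ((lzpow r k).coeff 1 - (if (1:ℤ) = k then 1 else 0)) := by
      intro k hk
      rcases eq_or_ne (1:ℤ) k with he | he
      · rw [if_pos he, if_pos he]; ring
      · rw [if_neg he, if_neg he]; ring
    rw [Finset.sum_congr rfl hterm, Finset.sum_add_distrib,
      Finset.sum_ite_eq (Finset.Icc (1:ℤ) (max (1 + Cr) 0)) 1 q.coeff,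
      if_pos (by rw [Finset.mem_Icc]; omega), hqv]
    have hrw : v + (∑ k ∈ Finset.Icc (1:ℤ) (max (1 + Cr) 0),
        q.coeff k * ((lzpow r k).coeff 1 - (if (1:ℤ) = k then 1 else 0))) - v
        = ∑ k ∈ Finset.Icc (1:ℤ) (max (1 + Cr) 0),
            q.coeff k * ((lzpow r k).coeff 1 - (if (1:ℤ) = k then 1 else 0)) := by ring
    rw [hrw]
    refine Ideal.sum_mem _ fun k hk => ?_
    rw [Finset.mem_Icc] at hk
    have hw := rpow k.toNat 1
    have hcast : ((k.toNat:ℤ)) = k := by omega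
    rw [hcast] at hw
    rw [lzpow_nonneg (by omega)]
    refine Ideal.mul_mem_left _ _ ?_
    convert hw using 2
  have hGch : h ∈ Gcheck A := by
    constructor
    · have hnilel : IsNilpotent (h.coeff 1 - v) := mem_nilradical.mp (hnil hco1)
      have h2 := hnilel.isUnit_add_right_of_commute hvu (Commute.all _ _)
      have h2' : IsUnit (h.coeff 1) := by
        convert h2 using 1
        ring
      exact h2' 
    · intro n hn
      exact mem_nilradical.mp (hnil (hle0 n hn))
  obtain ⟨e2, he20, he2⟩ := lb (h - posPart h)
  have hcinNh : CIn I (h - posPart h) := by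
    intro d
    rw [HahnSeries.coeff_sub, posPart_coeff]
    rcases le_or_gt 1 d with h1 | h1
    · rw [if_pos h1, sub_self]; exact I.zero_mem
    · rw [if_neg (by omega), sub_zero]
      exact hle0 d (by omega)
  obtain ⟨Chh, Dhh, hChh, hDhh, hUh, hGh⟩ :
      ∃ C D : ℤ, 0 ≤ C ∧ 0 ≤ D ∧ IsUnit h ∧ Good h C D := by
    refine good_package (P := posPart h) (N := h - posPart h) (by ring) (posPart_OG h)
      ?_ he20 he2 (hcinNh.pow_eq_zero hIM) hM1
    rw [posPart_coeff, if_pos le_rfl]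
    exact hGch.1
  refine ⟨h, hGch, ?_⟩
  intro d
  have hasc := comp_assoc hGq hCq hDq hUq hGr hCr hDr hUr (hhdef ▸ hGh) g d
  rw [← hXm] at hasc
  rw [hhdef, ← hasc]
  exact hs2 d

/-- Every element of `Ǧ(A)` is invertible under composition. -/
theorem Gcheck_inv_exists' (g : LaurentSeries A) (hg : g ∈ Gcheck A) :
    ∃ h ∈ Gcheck A,
      (∀ d : ℤ, compCoeff g h d = (HahnSeries.single (1 : ℤ) (1 : A)).coeff d) ∧
      (∀ d : ℤ, compCoeff h g d = (HahnSeries.single (1 : ℤ) (1 : A)).coeff d) := by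
  classical
  obtain ⟨h, hGch, hright⟩ := right_inv hg
  obtain ⟨k, hkmem, hk⟩ := right_inv hGch
  obtain ⟨Cg, Dg, hCg, hDg, hUg, hGg⟩ := gcheck_good hg
  obtain ⟨Chh, Dhh, hChh, hDhh, hUh, hGh⟩ := gcheck_good hGch
  obtain ⟨Ck, Dk, hCk, hDk, hUk, hGk⟩ := gcheck_good hkmem
  have hgh : comp g h = HahnSeries.single 1 1 := by
    ext d
    rw [comp_coeff (compOK_of_good hGh hDhh g), hright d]
  have hhk : comp h k = HahnSeries.single 1 1 := by
    ext d
    rw [comp_coeff (compOK_of_good hGk hDk h), hk d]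
  obtain ⟨CX, DX, hCX, hDX, hUX, hGX⟩ := good_X (A := A)
  have hkg : k = g := by
    ext d
    have hasc := comp_assoc hGh hChh hDhh hUh hGk hCk hDk hUk
      (hhk.symm ▸ hGX) g d
    rw [hgh, hhk, compCoeff_X_left, compCoeff_X_right] at hasc
    exact hasc
  refine ⟨h, hGch, hright, ?_⟩
  intro d
  rw [← hkg]
  exact hk d

end Aux

/-- Every element of `Ǧ(A)` is invertible under composition: for `g ∈ Ǧ(A)` there is
`h ∈ Ǧ(A)` with `g ∘ h = h ∘ g = x`.  Hence `Ǧ(A)` is a group under composition. -/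
theorem Gcheck_inv_exists (A : Type*) [CommRing A] (g : LaurentSeries A)
    (hg : g ∈ Gcheck A) :
    ∃ h ∈ Gcheck A,
      (∀ d : ℤ, compCoeff g h d = (HahnSeries.single (1 : ℤ) (1 : A)).coeff d) ∧
      (∀ d : ℤ, compCoeff h g d = (HahnSeries.single (1 : ℤ) (1 : A)).coeff d) := by
  obtain ⟨h, hGch, h1, h2⟩ := Gcheck_inv_exists' g hg
  exact ⟨h, hGch, h1, h2⟩

end Tate
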